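/- Vanishing tail integral of the nonlinearity along stretched-exponentially small values. Define k(λ) := −ψ(λ)/λ for λ > 0. Assume condition (H1) holds with exponent γ > 0. Then for any δ with 1/(2+γ) < δ < 1 and any constant c > 0, lim_{r→∞} ∫_r^∞ (1 − k(c e^{−s^δ})) ds = 0. -/

import Mathlib

open MeasureTheory Set Filter Topology
open scoped ENNReal

/-- The branching mechanism ψ(λ) = −λ + βλ² + ∫₀^∞ (e^{−λy} − 1 + λy) n(dy). -/
noncomputable def psi (β : ℝ) (n : Measure ℝ) (l : ℝ) : ℝ :=
  -l + β * l ^ 2 + ∫ y in Ioi (0 : ℝ), (Real.exp (-l * y) - 1 + l * y) ∂n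

/-- The normalized branching mechanism k(λ) := −ψ(λ)/λ for λ > 0. -/
noncomputable def kFun (β : ℝ) (n : Measure ℝ) (l : ℝ) : ℝ := -psi β n l / l

/-- Elementary bound: `e^{-x} - 1 + x ≤ min (x²) x` for `x ≥ 0`. -/
lemma aux_exp_bound {x : ℝ} (hx : 0 ≤ x) : Real.exp (-x) - 1 + x ≤ min (x ^ 2) x := by
  have h1 : Real.exp (-x) * Real.exp x = 1 := by
    rw [← Real.exp_add]; simp
  have h2 : 1 + x ≤ Real.exp x := by
    have := Real.add_one_le_exp x; linarith
  have h3 : 0 < Real.exp (-x) := Real.exp_pos _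
  have h4 : Real.exp (-x) * (1 + x) ≤ 1 := by nlinarith
  rw [le_min_iff]
  constructor
  · nlinarith [pow_nonneg hx 3, sq_nonneg x]
  · have h5 : Real.exp (-x) ≤ Real.exp 0 := Real.exp_le_exp.mpr (by linarith)
    rw [Real.exp_zero] at h5
    linarith

/-- Integrability of stretched exponentials. -/
lemma aux_integrable_exp_rpow {d : ℝ} (hd : 0 < d) {b : ℝ} (hb : 0 < b) :
    IntegrableOn (fun s : ℝ => Real.exp (-b * s ^ d)) (Ioi (0 : ℝ)) := by
  have h1 : IntegrableOn (fun u : ℝ => u ^ (1 / d - 1) * Real.exp (-b * u)) (Ioi (0 : ℝ)) := by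
    have hq : (-1 : ℝ) < 1 / d - 1 := by
      have : 0 < 1 / d := by positivity
      linarith
    have := integrableOn_rpow_mul_exp_neg_mul_rpow (p := 1) (s := 1 / d - 1) (b := b)
      hq zero_lt_one hb
    simpa [Real.rpow_one] using this
  have h2 := (integrableOn_Ioi_comp_rpow_iff
      (fun u : ℝ => u ^ (1 / d - 1) * Real.exp (-b * u)) hd.ne').mpr h1
  have h3 : IntegrableOn (fun x : ℝ => d * Real.exp (-b * x ^ d)) (Ioi (0 : ℝ)) := by
    refine h2.congr_fun (fun x hx => ?_) measurableSet_Ioi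
    have hx0 : (0 : ℝ) < x := hx
    have hdd : d * (1 / d - 1) = 1 - d := by field_simp
    simp only [smul_eq_mul]; rw [← Real.rpow_mul hx0.le, hdd, abs_of_pos hd]
    have hxx : x ^ (d - 1) * x ^ (1 - d) = 1 := by
      rw [← Real.rpow_add hx0]; norm_num
    linear_combination (d * Real.exp (-b * x ^ d)) * hxx
  have h4 := h3.const_mul d⁻¹
  simp only [← mul_assoc, inv_mul_cancel₀ hd.ne', one_mul] at h4
  exact h4

/-- Scaling of the min: `min ((ly)²) (ly) = l · min (l y²) y`. -/
lemma aux_min_scale {l y : ℝ} (hl : 0 < l) (hy : 0 ≤ y) :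
    min ((l * y) ^ 2) (l * y) = l * min (l * y ^ 2) y := by
  rcases le_total (l * y ^ 2) y with h | h
  · have h2 : (l * y) ^ 2 ≤ l * y := by nlinarith [mul_le_mul_of_nonneg_left h hl.le]
    rw [min_eq_left h2, min_eq_left h]; ring
  · have h2 : l * y ≤ (l * y) ^ 2 := by nlinarith [mul_le_mul_of_nonneg_left h hl.le]
    rw [min_eq_right h2, min_eq_right h]

/-- Comparison of mins. -/
lemma aux_min_le {l y : ℝ} (hy : 0 ≤ y) :
    min (l * y ^ 2) y ≤ max l 1 * min (y ^ 2) y := by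
  rcases le_total (y ^ 2) y with h | h
  · rw [min_eq_left h]
    calc min (l * y ^ 2) y ≤ l * y ^ 2 := min_le_left _ _
      _ ≤ max l 1 * y ^ 2 := by nlinarith [le_max_left l 1, sq_nonneg y]
  · rw [min_eq_right h]
    calc min (l * y ^ 2) y ≤ y := min_le_right _ _
      _ ≤ max l 1 * y := by nlinarith [le_max_right l 1]

/-- Key pointwise bound: `1 - k(l) ≤ β l + ∫ min(l y², y) n(dy)` (in `ℝ≥0∞`). -/
lemma aux_one_sub_k_le (β : ℝ) (hβ : 0 ≤ β) (n : Measure ℝ) [SigmaFinite n]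
    (hn : ∫⁻ y in Ioi (0 : ℝ), ENNReal.ofReal (min (y ^ 2) y) ∂n < ⊤)
    {l : ℝ} (hl : 0 < l) :
    ENNReal.ofReal (1 - kFun β n l) ≤
      ENNReal.ofReal (β * l) +
        ∫⁻ y in Ioi (0 : ℝ), ENNReal.ofReal (min (l * y ^ 2) y) ∂n := by
  have hl0 : l ≠ 0 := hl.ne'
  have hf_nn : ∀ y : ℝ, 0 ≤ Real.exp (-l * y) - 1 + l * y := fun y => by
    have h := Real.add_one_le_exp (-(l * y))
    rw [neg_mul]
    linarith
  have hf_cont : Continuous fun y : ℝ => Real.exp (-l * y) - 1 + l * y := by continuity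
  have hbound : ∀ y ∈ Ioi (0 : ℝ), Real.exp (-l * y) - 1 + l * y ≤ l * min (l * y ^ 2) y := by
    intro y hy
    have hy0 : (0 : ℝ) ≤ y := (le_of_lt hy)
    have h := aux_exp_bound (mul_nonneg hl.le hy0)
    rw [aux_min_scale hl hy0] at h
    rw [neg_mul]
    convert h using 3
  -- integrability of f on Ioi 0 w.r.t. n
  have hfi : Integrable (fun y : ℝ => Real.exp (-l * y) - 1 + l * y) (n.restrict (Ioi 0)) := by
    refine ⟨hf_cont.aestronglyMeasurable, ?_⟩
    rw [hasFiniteIntegral_iff_ofReal (ae_of_all _ hf_nn)]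
    have hle : ∫⁻ y in Ioi (0 : ℝ), ENNReal.ofReal ((Real.exp (-l * y) - 1 + l * y)) ∂n ≤
        ∫⁻ y in Ioi (0 : ℝ), ENNReal.ofReal (l * max l 1) * ENNReal.ofReal (min (y ^ 2) y) ∂n := by
      refine setLIntegral_mono' measurableSet_Ioi fun y hy => ?_
      rw [← ENNReal.ofReal_mul (by positivity)]
      refine ENNReal.ofReal_le_ofReal ?_
      calc (Real.exp (-l * y) - 1 + l * y) ≤ l * min (l * y ^ 2) y := hbound y hy
        _ ≤ l * (max l 1 * min (y ^ 2) y) :=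
            mul_le_mul_of_nonneg_left (aux_min_le (le_of_lt hy)) hl.le
        _ = l * max l 1 * min (y ^ 2) y := by ring
    refine lt_of_le_of_lt hle ?_
    rw [lintegral_const_mul' _ _ ENNReal.ofReal_ne_top]
    exact ENNReal.mul_lt_top ENNReal.ofReal_lt_top hn
  have hkey : 1 - kFun β n l = β * l + (∫ y in Ioi (0 : ℝ), (Real.exp (-l * y) - 1 + l * y) ∂n) / l := by
    rw [kFun, psi]
    field_simp
    ring
  have hint_nn : 0 ≤ ∫ y in Ioi (0 : ℝ), (Real.exp (-l * y) - 1 + l * y) ∂n := integral_nonneg hf_nn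
  rw [hkey, ENNReal.ofReal_add (by positivity) (div_nonneg hint_nn hl.le)]
  refine add_le_add le_rfl ?_
  have hdiv : (∫ y in Ioi (0 : ℝ), (Real.exp (-l * y) - 1 + l * y) ∂n) / l = ∫ y in Ioi (0 : ℝ), (Real.exp (-l * y) - 1 + l * y) / l ∂n := by
    rw [integral_div]
  rw [hdiv]
  calc ENNReal.ofReal (∫ y in Ioi (0 : ℝ), (Real.exp (-l * y) - 1 + l * y) / l ∂n)
      = ∫⁻ y in Ioi (0 : ℝ), ENNReal.ofReal ((Real.exp (-l * y) - 1 + l * y) / l) ∂n :=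
        ofReal_integral_eq_lintegral_ofReal (hfi.div_const l)
          (ae_of_all _ fun y => div_nonneg (hf_nn y) hl.le)
    _ ≤ ∫⁻ y in Ioi (0 : ℝ), ENNReal.ofReal (min (l * y ^ 2) y) ∂n := by
        refine setLIntegral_mono' measurableSet_Ioi fun y hy => ?_
        refine ENNReal.ofReal_le_ofReal ?_
        rw [div_le_iff₀ hl]
        calc (Real.exp (-l * y) - 1 + l * y) ≤ l * min (l * y ^ 2) y := hbound y hy
          _ = min (l * y ^ 2) y * l := by ring

/-- `c y² e^{-max(0, 2 log(cy))/2} ≤ y` for `y > 0`. -/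
lemma aux_cyM {c y : ℝ} (hc : 0 < c) (hy : 0 < y) :
    c * y ^ 2 * Real.exp (-(max 0 (2 * Real.log (c * y))) / 2) ≤ y := by
  rcases le_or_gt (Real.log (c * y)) 0 with h | h
  · have hcy : c * y ≤ 1 := by
      calc c * y = Real.exp (Real.log (c * y)) := (Real.exp_log (mul_pos hc hy)).symm
        _ ≤ Real.exp 0 := Real.exp_le_exp.mpr h
        _ = 1 := Real.exp_zero
    rw [max_eq_left (by linarith)]
    norm_num
    nlinarith
  · rw [max_eq_right (by linarith)]
    have heq : -(2 * Real.log (c * y)) / 2 = -Real.log (c * y) := by ring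
    rw [heq, Real.exp_neg, Real.exp_log (mul_pos hc hy)]
    have : c * y ^ 2 * (c * y)⁻¹ = y := by
      field_simp
    rw [this]

/-- Bound on the threshold `T'` in terms of `1 + (log y)^(2+γ)`. -/
lemma aux_Tbound {c δ γ y : ℝ} (hc : 0 < c) (hδ0 : 0 < δ) (hpd : 1 / δ ≤ 2 + γ)
    (hγ0 : 0 < 2 + γ) (hy : 1 < y) :
    max 1 ((max 0 (2 * Real.log (c * y))) ^ (1 / δ)) ≤
      (1 + (2 * (2 * |Real.log c| + 2)) ^ (1 / δ)) * (1 + Real.log y ^ (2 + γ)) := by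
  set t := Real.log y with ht
  have ht0 : 0 < t := Real.log_pos hy
  set a : ℝ := 2 * |Real.log c| + 2 with ha
  have ha0 : 0 < a := by positivity
  have hlog : Real.log (c * y) = Real.log c + t := Real.log_mul hc.ne' (by linarith)
  have hmax1 : (1 : ℝ) ≤ max 1 t := le_max_left _ _
  have hmaxt : t ≤ max 1 t := le_max_right _ _
  have hM : max 0 (2 * Real.log (c * y)) ≤ 2 * a * max 1 t := by
    rw [hlog]
    apply max_le
    · positivity
    · nlinarith [le_abs_self (Real.log c), abs_nonneg (Real.log c)]
  have h1 : (max 0 (2 * Real.log (c * y))) ^ (1 / δ) ≤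
      (2 * a) ^ (1 / δ) * (max 1 t) ^ (1 / δ) := by
    rw [← Real.mul_rpow (by positivity) (by positivity)]
    exact Real.rpow_le_rpow (le_max_left _ _) hM (by positivity)
  have h2 : (max 1 t) ^ (1 / δ) ≤ (max 1 t) ^ (2 + γ) :=
    Real.rpow_le_rpow_of_exponent_le (le_max_left _ _) hpd
  have h3 : (max 1 t) ^ (2 + γ) ≤ 1 + t ^ (2 + γ) := by
    rcases max_cases 1 t with ⟨h, _⟩ | ⟨h, _⟩
    · rw [h, Real.one_rpow]
      have : 0 ≤ t ^ (2 + γ) := Real.rpow_nonneg ht0.le _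
      linarith
    · rw [h]; linarith
  have hX0 : 0 ≤ (2 * a) ^ (1 / δ) := Real.rpow_nonneg (by positivity) _
  have htp0 : 0 ≤ t ^ (2 + γ) := Real.rpow_nonneg ht0.le _
  have hmax10 : 0 ≤ (max 1 t) ^ (1 / δ) := Real.rpow_nonneg (by positivity) _
  apply max_le
  · nlinarith
  · nlinarith

theorem tail_integral_vanishes
    (β : ℝ) (hβ : 0 ≤ β) (n : Measure ℝ) [SigmaFinite n]
    (hn : ∫⁻ y in Ioi (0 : ℝ), ENNReal.ofReal (min (y ^ 2) y) ∂n < ⊤)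
    (γ : ℝ) (hγ : 0 < γ)
    (hH1 : ∫⁻ y in Ioi (1 : ℝ), ENNReal.ofReal (y * Real.log y ^ (2 + γ)) ∂n < ⊤)
    (δ : ℝ) (hδ₁ : 1 / (2 + γ) < δ) (hδ₂ : δ < 1) (c : ℝ) (hc : 0 < c) :
    Tendsto (fun r : ℝ => ∫⁻ s in Ioi r,
        ENNReal.ofReal (1 - kFun β n (c * Real.exp (-s ^ δ)))) atTop (𝓝 0) := by
  have hp2 : (0 : ℝ) < 2 + γ := by linarith
  have hδ0 : 0 < δ := lt_trans (by positivity) hδ₁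
  have hpd : 1 / δ ≤ 2 + γ := by
    rw [div_le_iff₀ hδ0]
    rw [div_lt_iff₀ hp2] at hδ₁
    nlinarith
  set F : ℝ → ℝ≥0∞ := fun s => ENNReal.ofReal (1 - kFun β n (c * Real.exp (-s ^ δ))) with hFdef
  -- measurability
  have hcont : Continuous (Function.uncurry fun (l y : ℝ) =>
      Real.exp (-l * y) - 1 + l * y) := by
    apply Continuous.add
    apply Continuous.sub
    · exact Real.continuous_exp.comp ((continuous_fst.neg).mul continuous_snd)
    · exact continuous_const
    · exact continuous_fst.mul continuous_snd
  have hpsi_meas : Measurable (psi β n) := by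
    unfold psi
    refine (measurable_id.neg.add ((measurable_id.pow_const 2).const_mul β)).add ?_
    exact hcont.stronglyMeasurable.integral_prod_right'.measurable
  have hk_meas : Measurable (kFun β n) := by
    unfold kFun
    exact hpsi_meas.neg.div measurable_id
  have hrpow_cont : Continuous fun s : ℝ => s ^ δ := Real.continuous_rpow_const hδ0.le
  have hlam_meas : Measurable fun s : ℝ => c * Real.exp (-s ^ δ) :=
    (continuous_const.mul (Real.continuous_exp.comp hrpow_cont.neg)).measurable
  have hF_meas : Measurable F :=
    ENNReal.measurable_ofReal.comp (measurable_const.sub (hk_meas.comp hlam_meas))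
  -- finiteness of stretched-exponential integrals
  have Kfin : ∀ b : ℝ, 0 < b →
      ∫⁻ s in Ioi (0 : ℝ), ENNReal.ofReal (Real.exp (-b * s ^ δ)) < ⊤ :=
    fun b hb => (aux_integrable_exp_rpow hδ0 hb).lintegral_lt_top
  have hK₁ : ∫⁻ s in Ioi (0 : ℝ), ENNReal.ofReal (Real.exp (-s ^ δ)) < ⊤ := by
    have := Kfin 1 one_pos
    simpa [neg_one_mul] using this
  set K₁ := ∫⁻ s in Ioi (0 : ℝ), ENNReal.ofReal (Real.exp (-s ^ δ)) with hK₁def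
  have hK₂ : ∫⁻ s in Ioi (0 : ℝ), ENNReal.ofReal (Real.exp (-(1 / 2) * s ^ δ)) < ⊤ :=
    Kfin _ (by norm_num)
  set K₂ := ∫⁻ s in Ioi (0 : ℝ), ENNReal.ofReal (Real.exp (-(1 / 2) * s ^ δ)) with hK₂def
  -- the inner integral in y
  set I : ℝ → ℝ≥0∞ := fun y =>
    ∫⁻ s in Ioi (1 : ℝ), ENNReal.ofReal (min (c * Real.exp (-s ^ δ) * y ^ 2) y) with hIdef
  -- main finiteness
  have hS : ∫⁻ s in Ioi (1 : ℝ), F s < ⊤ := by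
    have hmeasA : Measurable fun s : ℝ => ENNReal.ofReal (β * (c * Real.exp (-s ^ δ))) :=
      ENNReal.measurable_ofReal.comp (hlam_meas.const_mul β)
    have hstep1 : ∫⁻ s in Ioi (1 : ℝ), F s ≤
        (∫⁻ s in Ioi (1 : ℝ), ENNReal.ofReal (β * (c * Real.exp (-s ^ δ)))) +
          ∫⁻ s in Ioi (1 : ℝ), (∫⁻ y in Ioi (0 : ℝ),
            ENNReal.ofReal (min (c * Real.exp (-s ^ δ) * y ^ 2) y) ∂n) := by
      rw [← lintegral_add_left hmeasA]
      refine lintegral_mono fun s => ?_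
      exact aux_one_sub_k_le β hβ n hn (by positivity)
    -- term A
    have hA : ∫⁻ s in Ioi (1 : ℝ), ENNReal.ofReal (β * (c * Real.exp (-s ^ δ))) < ⊤ := by
      have heq : ∀ s : ℝ, ENNReal.ofReal (β * (c * Real.exp (-s ^ δ))) =
          ENNReal.ofReal (β * c) * ENNReal.ofReal (Real.exp (-s ^ δ)) := fun s => by
        rw [← ENNReal.ofReal_mul (by positivity)]; ring_nf
      calc ∫⁻ s in Ioi (1 : ℝ), ENNReal.ofReal (β * (c * Real.exp (-s ^ δ)))
          = ∫⁻ s in Ioi (1 : ℝ), ENNReal.ofReal (β * c) *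
              ENNReal.ofReal (Real.exp (-s ^ δ)) := by simp_rw [heq]
        _ = ENNReal.ofReal (β * c) * ∫⁻ s in Ioi (1 : ℝ),
              ENNReal.ofReal (Real.exp (-s ^ δ)) :=
            lintegral_const_mul' _ _ ENNReal.ofReal_ne_top
        _ ≤ ENNReal.ofReal (β * c) * K₁ :=
            mul_le_mul_right (lintegral_mono_set (Ioi_subset_Ioi zero_le_one)) _
        _ < ⊤ := ENNReal.mul_lt_top ENNReal.ofReal_lt_top hK₁
    -- Tonelli swap for term B
    have hg_meas : Measurable (Function.uncurry fun (s y : ℝ) =>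
        ENNReal.ofReal (min (c * Real.exp (-s ^ δ) * y ^ 2) y)) := by
      apply ENNReal.measurable_ofReal.comp
      exact ((hlam_meas.comp measurable_fst).mul (measurable_snd.pow_const 2)).min measurable_snd
    have hswap : ∫⁻ s in Ioi (1 : ℝ), (∫⁻ y in Ioi (0 : ℝ),
          ENNReal.ofReal (min (c * Real.exp (-s ^ δ) * y ^ 2) y) ∂n) =
        ∫⁻ y in Ioi (0 : ℝ), I y ∂n :=
      lintegral_lintegral_swap hg_meas.aemeasurable
    -- small y part
    have hsmall : ∫⁻ y in Ioc (0 : ℝ) 1, I y ∂n < ⊤ := by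
      have hpoint : ∀ y ∈ Ioc (0 : ℝ) 1, I y ≤
          (ENNReal.ofReal c * K₁) * ENNReal.ofReal (min (y ^ 2) y) := by
        intro y hy
        have hy0 : 0 < y := hy.1
        have hy1 : y ≤ 1 := hy.2
        have hmin : min (y ^ 2) y = y ^ 2 := min_eq_left (by nlinarith)
        calc I y ≤ ∫⁻ s in Ioi (1 : ℝ),
              ENNReal.ofReal (c * y ^ 2) * ENNReal.ofReal (Real.exp (-s ^ δ)) := by
              refine setLIntegral_mono' measurableSet_Ioi fun s _ => ?_
              rw [← ENNReal.ofReal_mul (by positivity)]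
              refine ENNReal.ofReal_le_ofReal ?_
              calc min (c * Real.exp (-s ^ δ) * y ^ 2) y
                  ≤ c * Real.exp (-s ^ δ) * y ^ 2 := min_le_left _ _
                _ = c * y ^ 2 * Real.exp (-s ^ δ) := by ring
          _ = ENNReal.ofReal (c * y ^ 2) * ∫⁻ s in Ioi (1 : ℝ),
                ENNReal.ofReal (Real.exp (-s ^ δ)) :=
              lintegral_const_mul' _ _ ENNReal.ofReal_ne_top
          _ ≤ ENNReal.ofReal (c * y ^ 2) * K₁ :=
              mul_le_mul_right (lintegral_mono_set (Ioi_subset_Ioi zero_le_one)) _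
          _ = (ENNReal.ofReal c * K₁) * ENNReal.ofReal (min (y ^ 2) y) := by
              rw [hmin, ENNReal.ofReal_mul hc.le]
              ring
      calc ∫⁻ y in Ioc (0 : ℝ) 1, I y ∂n
          ≤ ∫⁻ y in Ioc (0 : ℝ) 1,
              (ENNReal.ofReal c * K₁) * ENNReal.ofReal (min (y ^ 2) y) ∂n :=
            setLIntegral_mono' measurableSet_Ioc hpoint
        _ = (ENNReal.ofReal c * K₁) * ∫⁻ y in Ioc (0 : ℝ) 1,
              ENNReal.ofReal (min (y ^ 2) y) ∂n :=
            lintegral_const_mul' _ _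
              (ENNReal.mul_ne_top ENNReal.ofReal_ne_top hK₁.ne)
        _ ≤ (ENNReal.ofReal c * K₁) * ∫⁻ y in Ioi (0 : ℝ),
              ENNReal.ofReal (min (y ^ 2) y) ∂n :=
            mul_le_mul_right (lintegral_mono_set Ioc_subset_Ioi_self) _
        _ < ⊤ := ENNReal.mul_lt_top
            (ENNReal.mul_lt_top ENNReal.ofReal_lt_top hK₁) hn
    -- integrability o(Real.exp (-l * y) - 1 + l * y) on (1,∞)
    have hybase : ∫⁻ y in Ioi (1 : ℝ), ENNReal.ofReal y ∂n < ⊤ := by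
      have hcong : ∀ᵐ y ∂n, y ∈ Ioi (1 : ℝ) →
          ENNReal.ofReal y = ENNReal.ofReal (min (y ^ 2) y) := by
        refine ae_of_all _ fun y hy => ?_
        have h1 : (1 : ℝ) < y := hy
        rw [min_eq_right (by nlinarith)]
      calc ∫⁻ y in Ioi (1 : ℝ), ENNReal.ofReal y ∂n
          = ∫⁻ y in Ioi (1 : ℝ), ENNReal.ofReal (min (y ^ 2) y) ∂n :=
            setLIntegral_congr_fun_ae measurableSet_Ioi hcong
        _ ≤ ∫⁻ y in Ioi (0 : ℝ), ENNReal.ofReal (min (y ^ 2) y) ∂n :=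
            lintegral_mono_set (Ioi_subset_Ioi zero_le_one)
        _ < ⊤ := hn
    -- big y part
    set C₁ : ℝ := 1 + (2 * (2 * |Real.log c| + 2)) ^ (1 / δ) with hC₁def
    have hC₁0 : 0 ≤ C₁ := by
      have h0 : 0 ≤ (2 * (2 * |Real.log c| + 2)) ^ (1 / δ) :=
        Real.rpow_nonneg (by positivity) _
      rw [hC₁def]
      linarith
    have hI_big : ∀ y ∈ Ioi (1 : ℝ), I y ≤
        ENNReal.ofReal (y * (C₁ * (1 + Real.log y ^ (2 + γ)))) + ENNReal.ofReal y * K₂ := by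
      intro y hy
      have hy1 : (1 : ℝ) < y := hy
      have hy0 : (0 : ℝ) < y := lt_trans zero_lt_one hy1
      set M : ℝ := max 0 (2 * Real.log (c * y)) with hMdef
      have hM0 : 0 ≤ M := le_max_left _ _
      set T' : ℝ := max 1 (M ^ (1 / δ)) with hT'def
      have hT'1 : (1 : ℝ) ≤ T' := le_max_left _ _
      have hT'0 : (0 : ℝ) ≤ T' := by linarith
      have hT'δ : M ≤ T' ^ δ := by
        have h1 : M = (M ^ (1 / δ)) ^ δ := by
          rw [← Real.rpow_mul hM0, one_div_mul_cancel hδ0.ne', Real.rpow_one]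
        rw [h1]
        exact Real.rpow_le_rpow (Real.rpow_nonneg hM0 _) (le_max_right _ _) hδ0.le
      have hsub : Ioi (1 : ℝ) ⊆ Ioc 1 T' ∪ Ioi T' := by
        intro s hs
        rcases le_or_gt s T' with h | h
        · exact Or.inl ⟨hs, h⟩
        · exact Or.inr h
      have hsplit : I y ≤
          (∫⁻ s in Ioc (1 : ℝ) T',
            ENNReal.ofReal (min (c * Real.exp (-s ^ δ) * y ^ 2) y)) +
          ∫⁻ s in Ioi T',
            ENNReal.ofReal (min (c * Real.exp (-s ^ δ) * y ^ 2) y) :=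
        (lintegral_mono_set hsub).trans (lintegral_union_le _ _ _)
      have hfirst : (∫⁻ s in Ioc (1 : ℝ) T',
          ENNReal.ofReal (min (c * Real.exp (-s ^ δ) * y ^ 2) y)) ≤
          ENNReal.ofReal y * ENNReal.ofReal T' := by
        calc (∫⁻ s in Ioc (1 : ℝ) T',
            ENNReal.ofReal (min (c * Real.exp (-s ^ δ) * y ^ 2) y))
            ≤ ∫⁻ _ in Ioc (1 : ℝ) T', ENNReal.ofReal y :=
              setLIntegral_mono' measurableSet_Ioc fun s _ =>
                ENNReal.ofReal_le_ofReal (min_le_right _ _)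
          _ = ENNReal.ofReal y * volume (Ioc (1 : ℝ) T') := setLIntegral_const _ _
          _ = ENNReal.ofReal y * ENNReal.ofReal (T' - 1) := by rw [Real.volume_Ioc]
          _ ≤ ENNReal.ofReal y * ENNReal.ofReal T' :=
              mul_le_mul_right (ENNReal.ofReal_le_ofReal (by linarith)) _
      have hsecond : (∫⁻ s in Ioi T',
          ENNReal.ofReal (min (c * Real.exp (-s ^ δ) * y ^ 2) y)) ≤
          ENNReal.ofReal y * K₂ := by
        have hpt : ∀ s ∈ Ioi T',
            ENNReal.ofReal (min (c * Real.exp (-s ^ δ) * y ^ 2) y) ≤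
              ENNReal.ofReal y * ENNReal.ofReal (Real.exp (-(1 / 2) * s ^ δ)) := by
          intro s hs
          have hsT : T' < s := hs
          have hsδ : M ≤ s ^ δ :=
            le_trans hT'δ (Real.rpow_le_rpow hT'0 hsT.le hδ0.le)
          rw [← ENNReal.ofReal_mul hy0.le]
          refine ENNReal.ofReal_le_ofReal ?_
          calc min (c * Real.exp (-s ^ δ) * y ^ 2) y
              ≤ c * Real.exp (-s ^ δ) * y ^ 2 := min_le_left _ _
            _ ≤ (c * y ^ 2 * Real.exp (-M / 2)) * Real.exp (-(1 / 2) * s ^ δ) := by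
                have hexp : Real.exp (-s ^ δ) ≤
                    Real.exp (-M / 2) * Real.exp (-(1 / 2) * s ^ δ) := by
                  rw [← Real.exp_add]
                  apply Real.exp_le_exp.mpr
                  linarith
                nlinarith [mul_le_mul_of_nonneg_left hexp
                  (by positivity : (0:ℝ) ≤ c * y ^ 2)]
            _ ≤ y * Real.exp (-(1 / 2) * s ^ δ) := by
                have := aux_cyM hc hy0
                have hexp2 : (0 : ℝ) < Real.exp (-(1 / 2) * s ^ δ) := Real.exp_pos _
                nlinarith
        calc (∫⁻ s in Ioi T',
            ENNReal.ofReal (min (c * Real.exp (-s ^ δ) * y ^ 2) y))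
            ≤ ∫⁻ s in Ioi T',
                ENNReal.ofReal y * ENNReal.ofReal (Real.exp (-(1 / 2) * s ^ δ)) :=
              setLIntegral_mono' measurableSet_Ioi hpt
          _ = ENNReal.ofReal y * ∫⁻ s in Ioi T',
                ENNReal.ofReal (Real.exp (-(1 / 2) * s ^ δ)) :=
              lintegral_const_mul' _ _ ENNReal.ofReal_ne_top
          _ ≤ ENNReal.ofReal y * K₂ :=
              mul_le_mul_right (lintegral_mono_set (Ioi_subset_Ioi (by linarith))) _
      have hT'bound : T' ≤ C₁ * (1 + Real.log y ^ (2 + γ)) :=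
        aux_Tbound hc hδ0 hpd hp2 hy1
      calc I y ≤ ENNReal.ofReal y * ENNReal.ofReal T' + ENNReal.ofReal y * K₂ :=
            hsplit.trans (add_le_add hfirst hsecond)
        _ ≤ ENNReal.ofReal (y * (C₁ * (1 + Real.log y ^ (2 + γ)))) +
              ENNReal.ofReal y * K₂ := by
            refine add_le_add ?_ le_rfl
            rw [ENNReal.ofReal_mul hy0.le]
            exact mul_le_mul_right (ENNReal.ofReal_le_ofReal hT'bound) _
    have hbig : ∫⁻ y in Ioi (1 : ℝ), I y ∂n < ⊤ := by
      have hmeas2 : Measurable fun y : ℝ => ENNReal.ofReal y * K₂ :=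
        ENNReal.measurable_ofReal.mul_const _
      calc ∫⁻ y in Ioi (1 : ℝ), I y ∂n
          ≤ ∫⁻ y in Ioi (1 : ℝ),
              (ENNReal.ofReal (y * (C₁ * (1 + Real.log y ^ (2 + γ)))) +
                ENNReal.ofReal y * K₂) ∂n :=
            setLIntegral_mono' measurableSet_Ioi hI_big
        _ = (∫⁻ y in Ioi (1 : ℝ),
              ENNReal.ofReal (y * (C₁ * (1 + Real.log y ^ (2 + γ)))) ∂n) +
              ∫⁻ y in Ioi (1 : ℝ), ENNReal.ofReal y * K₂ ∂n :=
            lintegral_add_right _ hmeas2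
        _ < ⊤ := by
            refine ENNReal.add_lt_top.mpr ⟨?_, ?_⟩
            · -- first piece
              have heq : ∀ y : ℝ, y * (C₁ * (1 + Real.log y ^ (2 + γ))) =
                  C₁ * (y + y * Real.log y ^ (2 + γ)) := fun y => by ring
              calc ∫⁻ y in Ioi (1 : ℝ),
                  ENNReal.ofReal (y * (C₁ * (1 + Real.log y ^ (2 + γ)))) ∂n
                  = ∫⁻ y in Ioi (1 : ℝ),
                      ENNReal.ofReal (C₁ * (y + y * Real.log y ^ (2 + γ))) ∂n := by
                    simp_rw [heq]
                _ ≤ ∫⁻ y in Ioi (1 : ℝ), ENNReal.ofReal C₁ *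
                      (ENNReal.ofReal y +
                        ENNReal.ofReal (y * Real.log y ^ (2 + γ))) ∂n := by
                    refine lintegral_mono fun y => ?_
                    rw [ENNReal.ofReal_mul hC₁0]
                    exact mul_le_mul_right ENNReal.ofReal_add_le _
                _ = ENNReal.ofReal C₁ * ((∫⁻ y in Ioi (1 : ℝ), ENNReal.ofReal y ∂n) +
                      ∫⁻ y in Ioi (1 : ℝ),
                        ENNReal.ofReal (y * Real.log y ^ (2 + γ)) ∂n) := by
                    rw [lintegral_const_mul' _ _ ENNReal.ofReal_ne_top,
                      lintegral_add_left ENNReal.measurable_ofReal]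
                _ < ⊤ := ENNReal.mul_lt_top ENNReal.ofReal_lt_top
                    (ENNReal.add_lt_top.mpr ⟨hybase, hH1⟩)
            · -- second piece
              rw [lintegral_mul_const' _ _ hK₂.ne]
              exact ENNReal.mul_lt_top hybase hK₂
    -- combine everything
    refine lt_of_le_of_lt hstep1 ?_
    rw [hswap]
    refine ENNReal.add_lt_top.mpr ⟨hA, ?_⟩
    have hsplitn : ∫⁻ y in Ioi (0 : ℝ), I y ∂n ≤
        (∫⁻ y in Ioc (0 : ℝ) 1, I y ∂n) + ∫⁻ y in Ioi (1 : ℝ), I y ∂n := by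
      rw [← Ioc_union_Ioi_eq_Ioi (zero_le_one : (0 : ℝ) ≤ 1)]
      exact lintegral_union_le _ _ _
    exact lt_of_le_of_lt hsplitn (ENNReal.add_lt_top.mpr ⟨hsmall, hbig⟩)
  -- conclusion: tail integrals tend to zero
  rw [ENNReal.tendsto_nhds_zero]
  intro ε hε
  set ν := volume.withDensity F with hνdef
  have hνIoi : ∀ r : ℝ, ν (Ioi r) = ∫⁻ s in Ioi r, F s := fun r =>
    withDensity_apply _ measurableSet_Ioi
  have hempty : (⋂ k : ℕ, Ioi (1 + (k : ℝ))) = ∅ := by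
    rw [eq_empty_iff_forall_notMem]
    intro x hx
    obtain ⟨k, hk⟩ := exists_nat_gt x
    have := mem_iInter.mp hx k
    simp only [mem_Ioi] at this
    linarith
  have htd : Tendsto (fun k : ℕ => ν (Ioi (1 + (k : ℝ)))) atTop (𝓝 0) := by
    have h := tendsto_measure_iInter_atTop (μ := ν) (s := fun k : ℕ => Ioi (1 + (k : ℝ)))
      (fun k => measurableSet_Ioi.nullMeasurableSet)
      (fun i j hij => Ioi_subset_Ioi (by exact_mod_cast add_le_add_right (Nat.cast_le.mpr hij) 1))
      ⟨0, by
        simp only [Nat.cast_zero, add_zero]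
        rw [hνIoi]
        exact hS.ne⟩
    rw [hempty] at h
    simpa [Function.comp_def] using h
  obtain ⟨k, hk⟩ := (ENNReal.tendsto_nhds_zero.mp htd ε hε).exists
  filter_upwards [eventually_ge_atTop (1 + (k : ℝ))] with r hr
  calc ∫⁻ s in Ioi r, F s = ν (Ioi r) := (hνIoi r).symm
    _ ≤ ν (Ioi (1 + (k : ℝ))) := measure_mono (Ioi_subset_Ioi hr)
    _ ≤ ε := hk
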